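/- Let f : [0,1] → [0,1] be a continuous surjection and ε > 0. Then f is P_ε if and only if there exist 0 ≤ x_1 < x_2 < x_3 ≤ 1 such that either (a) |f(x_1) − 0| < ε, |f(x_3) − 0| < ε and |f(x_2) − 1| < ε, or (b) |f(x_1) − 1| < ε, |f(x_3) − 1| < ε and |f(x_2) − 0| < ε. -/

import Mathlib

open Set Filter Topology Metric

/-- A continuous surjection `f : [0,1] → [0,1]` is `P_ε` if for every pair of closed intervals
`A, B ⊆ [0,1]` with `A ∪ B = [0,1]`, the Hausdorff distance of `f(A)` or of `f(B)` to `[0,1]`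
is smaller than `ε`. -/
def IsPeps (f : ℝ → ℝ) (ε : ℝ) : Prop :=
  ∀ a b c d : ℝ, Set.Icc a b ∪ Set.Icc c d = Set.Icc (0 : ℝ) 1 →
    Metric.hausdorffDist (f '' Set.Icc a b) (Set.Icc (0 : ℝ) 1) < ε ∨
    Metric.hausdorffDist (f '' Set.Icc c d) (Set.Icc (0 : ℝ) 1) < ε


section Helpers

variable {f : ℝ → ℝ} {ε : ℝ}

private lemma haus_lt_of_dense (hε : 0 < ε) {a b : ℝ} (hab : Icc a b ⊆ Icc (0:ℝ) 1)
    (hm : MapsTo f (Icc 0 1) (Icc 0 1))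
    (hd : ∀ y ∈ Icc (0:ℝ) 1, ∃ x ∈ Icc a b, |f x - y| < ε) :
    hausdorffDist (f '' Icc a b) (Icc (0:ℝ) 1) < ε := by
  obtain ⟨x0, hx0, -⟩ := hd 0 (by norm_num)
  obtain ⟨y0, hy0, hmax⟩ := (isCompact_Icc (a := (0:ℝ)) (b := 1)).exists_isMaxOn
      (nonempty_Icc.2 zero_le_one) ((continuous_infDist_pt (f '' Icc a b)).continuousOn)
  set r := infDist y0 (f '' Icc a b) with hr
  have hr_lt : r < ε := by
    obtain ⟨x, hx, hlt⟩ := hd y0 hy0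
    calc r ≤ dist y0 (f x) := infDist_le_dist_of_mem (mem_image_of_mem f hx)
    _ = |f x - y0| := by rw [dist_comm, Real.dist_eq]
    _ < ε := hlt
  have hle : hausdorffDist (f '' Icc a b) (Icc (0:ℝ) 1) ≤ r := by
    apply hausdorffDist_le_of_infDist infDist_nonneg
    · intro z hz
      obtain ⟨x, hx, rfl⟩ := hz
      rw [infDist_zero_of_mem (hm (hab hx))]
      exact infDist_nonneg
    · intro y hy; exact hmax hy
  linarith

private lemma dense_of_haus {a b : ℝ} (hne : (Icc a b).Nonempty)
    (hab : Icc a b ⊆ Icc (0:ℝ) 1) (hm : MapsTo f (Icc 0 1) (Icc 0 1))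
    (h : hausdorffDist (f '' Icc a b) (Icc (0:ℝ) 1) < ε) :
    ∀ y ∈ Icc (0:ℝ) 1, ∃ x ∈ Icc a b, |f x - y| < ε := by
  have hSne : (f '' Icc a b).Nonempty := hne.image f
  have hSb : Bornology.IsBounded (f '' Icc a b) :=
    (isBounded_Icc (0:ℝ) 1).subset (by rintro z ⟨x, hx, rfl⟩; exact hm (hab hx))
  have hedist : hausdorffEDist (Icc (0:ℝ) 1) (f '' Icc a b) ≠ ⊤ := by
    rw [hausdorffEDist_comm]
    exact hausdorffEdist_ne_top_of_nonempty_of_bounded hSne ⟨0, by norm_num⟩ hSb (isBounded_Icc 0 1)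
  intro y hy
  have h1 : infDist y (f '' Icc a b) ≤ hausdorffDist (Icc (0:ℝ) 1) (f '' Icc a b) :=
    infDist_le_hausdorffDist_of_mem hy hedist
  rw [hausdorffDist_comm] at h1
  obtain ⟨z, hz, hd⟩ := (infDist_lt_iff hSne).1 (lt_of_le_of_lt h1 h)
  obtain ⟨x, hx, rfl⟩ := hz
  exact ⟨x, hx, by rwa [Real.dist_eq, abs_sub_comm] at hd⟩

private lemma dense_of_two_points (hε : 0 < ε) (hc : ContinuousOn f (Icc 0 1))
    (hm : MapsTo f (Icc 0 1) (Icc 0 1)) {a b s t : ℝ} (hab : Icc a b ⊆ Icc (0:ℝ) 1)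
    (hsm : s ∈ Icc a b) (htm : t ∈ Icc a b) (h0 : |f s - 0| < ε) (h1 : |f t - 1| < ε) :
    ∀ y ∈ Icc (0:ℝ) 1, ∃ x ∈ Icc a b, |f x - y| < ε := by
  intro y hy
  have hfs : f s ∈ Icc (0:ℝ) 1 := hm (hab hsm)
  have hft : f t ∈ Icc (0:ℝ) 1 := hm (hab htm)
  have hfs' : f s < ε := by
    rw [sub_zero] at h0; exact (le_abs_self _).trans_lt h0
  have hft' : 1 - ε < f t := by
    have := (abs_lt.1 h1).1; linarith
  by_cases hmem : y ∈ uIcc (f s) (f t)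
  · have hsub : uIcc s t ⊆ Icc a b := (ordConnected_Icc).uIcc_subset hsm htm
    obtain ⟨x, hx, hfx⟩ := intermediate_value_uIcc (hc.mono (hsub.trans hab)) hmem
    exact ⟨x, hsub hx, by rw [hfx, sub_self, abs_zero]; exact hε⟩
  · rw [mem_uIcc] at hmem
    push_neg at hmem
    rcases le_or_gt y (f s) with h | h
    · exact ⟨s, hsm, abs_lt.2 ⟨by linarith, by linarith [hy.1]⟩⟩
    · rcases le_or_gt y (f t) with h2 | h2
      · exact absurd (hmem.1 h.le) (by linarith)
      · exact ⟨t, htm, abs_lt.2 ⟨by linarith [hy.2], by linarith⟩⟩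

end Helpers

private lemma main_contra {f : ℝ → ℝ} {ε : ℝ} (hε : 0 < ε)
    (hm : MapsTo f (Icc 0 1) (Icc 0 1)) (hc : ContinuousOn f (Icc 0 1))
    (hP : IsPeps f ε) {u v : ℝ}
    (huv : 2 * ε ≤ |u - v|)
    (hSne : ∃ x, x ∈ Icc (0:ℝ) 1 ∧ |f x - u| < ε)
    (hTne : ∃ x, x ∈ Icc (0:ℝ) 1 ∧ |f x - v| < ε)
    (hu : u ∈ Icc (0:ℝ) 1) (hv : v ∈ Icc (0:ℝ) 1)
    (hsep : ∀ l, l ∈ Icc (0:ℝ) 1 → |f l - u| < ε →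
      ∀ h, h ∈ Icc (0:ℝ) 1 → |f h - v| < ε → l < h) :
    False := by
  classical
  set S := {x : ℝ | x ∈ Icc (0:ℝ) 1 ∧ |f x - u| < ε} with hSdef
  set T := {x : ℝ | x ∈ Icc (0:ℝ) 1 ∧ |f x - v| < ε} with hTdef
  obtain ⟨p, hp⟩ := hSne
  obtain ⟨q, hq⟩ := hTne
  have hpS : p ∈ S := hp
  have hqT : q ∈ T := hq
  have hSbdd : BddAbove S := ⟨1, fun x hx => hx.1.2⟩
  have hTbdd : BddBelow T := ⟨0, fun x hx => hx.1.1⟩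
  set lam := sSup S with hlam
  set eta := sInf T with heta
  have hlam0 : 0 ≤ lam := hp.1.1.trans (le_csSup hSbdd hpS)
  have hlam1 : lam ≤ 1 := csSup_le ⟨p, hpS⟩ fun x hx => hx.1.2
  have heta0 : 0 ≤ eta := le_csInf ⟨q, hqT⟩ fun x hx => hx.1.1
  have heta1 : eta ≤ 1 := (csInf_le hTbdd hqT).trans hq.1.2
  have hlameta : lam ≤ eta := csSup_le ⟨p, hpS⟩ fun l hl =>
    le_csInf ⟨q, hqT⟩ fun h hh => (hsep l hl.1 hl.2 h hh.1 hh.2).le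
  obtain ⟨t, ht01, hSle, hTle, htS, htT⟩ :
      ∃ t, t ∈ Icc (0:ℝ) 1 ∧ (∀ l ∈ S, l ≤ t) ∧ (∀ h ∈ T, t ≤ h) ∧ t ∉ S ∧ t ∉ T := by
    rcases eq_or_lt_of_le hlameta with he | hlt
    · have hclS : IsClosed (Icc (0:ℝ) 1 ∩ f ⁻¹' (closedBall u ε)) :=
        hc.preimage_isClosed_of_isClosed isClosed_Icc isClosed_closedBall
      have hclT : IsClosed (Icc (0:ℝ) 1 ∩ f ⁻¹' (closedBall v ε)) :=
        hc.preimage_isClosed_of_isClosed isClosed_Icc isClosed_closedBall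
      have hSsub : S ⊆ Icc (0:ℝ) 1 ∩ f ⁻¹' (closedBall u ε) := fun x hx =>
        ⟨hx.1, by rw [mem_preimage, Metric.mem_closedBall, Real.dist_eq]; exact hx.2.le⟩
      have hTsub : T ⊆ Icc (0:ℝ) 1 ∩ f ⁻¹' (closedBall v ε) := fun x hx =>
        ⟨hx.1, by rw [mem_preimage, Metric.mem_closedBall, Real.dist_eq]; exact hx.2.le⟩
      have hmemS := (hclS.closure_subset_iff.2 hSsub) (csSup_mem_closure ⟨p, hpS⟩ hSbdd)
      have hmemT : lam ∈ Icc (0:ℝ) 1 ∩ f ⁻¹' (closedBall v ε) := by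
        apply hclT.closure_subset_iff.2 hTsub
        rw [he]
        exact csInf_mem_closure ⟨q, hqT⟩ hTbdd
      have hfu : |f lam - u| ≤ ε := by
        have := hmemS.2
        rwa [mem_preimage, Metric.mem_closedBall, Real.dist_eq] at this
      have hfv : |f lam - v| ≤ ε := by
        have := hmemT.2
        rwa [mem_preimage, Metric.mem_closedBall, Real.dist_eq] at this
      have habs := abs_le.1 hfv
      refine ⟨lam, ⟨hlam0, hlam1⟩, fun l hl => le_csSup hSbdd hl,
        fun h hh => le_of_eq_of_le he (csInf_le hTbdd hh), ?_, ?_⟩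
      · intro hmem
        have h1 := abs_lt.1 hmem.2
        rcases abs_cases (u - v) with ⟨he', _⟩ | ⟨he', _⟩ <;> rw [he'] at huv <;> linarith
      · intro hmem
        have h1 := abs_lt.1 hmem.2
        have h2 := abs_le.1 hfu
        rcases abs_cases (u - v) with ⟨he', _⟩ | ⟨he', _⟩ <;> rw [he'] at huv <;> linarith
    · refine ⟨(lam + eta) / 2, ⟨by linarith, by linarith⟩,
        fun l hl => by linarith [le_csSup hSbdd hl],
        fun h hh => by linarith [csInf_le hTbdd hh], ?_, ?_⟩
      · intro hmem; have := le_csSup hSbdd hmem; simp only [← hlam] at this; linarith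
      · intro hmem; have := csInf_le hTbdd hmem; simp only [← heta] at this; linarith
  rcases hP 0 t t 1 (Icc_union_Icc_eq_Icc ht01.1 ht01.2) with h | h
  · obtain ⟨x, hx, hlt⟩ := dense_of_haus ⟨t, ht01.1, le_refl t⟩
      (Icc_subset_Icc le_rfl ht01.2) hm h v hv
    have hxT : x ∈ T := ⟨⟨hx.1, hx.2.trans ht01.2⟩, hlt⟩
    exact htT (le_antisymm hx.2 (hTle x hxT) ▸ hxT)
  · obtain ⟨x, hx, hlt⟩ := dense_of_haus ⟨t, le_refl t, ht01.2⟩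
      (Icc_subset_Icc ht01.1 le_rfl) hm h u hu
    have hxS : x ∈ S := ⟨⟨ht01.1.trans hx.1, hx.2⟩, hlt⟩
    exact htS (le_antisymm (hSle x hxS) hx.1 ▸ hxS)


/-- A continuous surjection `f : [0,1] → [0,1]` is `P_ε` if and only if there
exist `0 ≤ x₁ < x₂ < x₃ ≤ 1` such that either `|f x₁ - 0|, |f x₃ - 0| < ε` and `|f x₂ - 1| < ε`,
or `|f x₁ - 1|, |f x₃ - 1| < ε` and `|f x₂ - 0| < ε`. -/
theorem isPeps_iff_three_points
    (f : ℝ → ℝ)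
    (hc : ContinuousOn f (Set.Icc 0 1)) (hm : Set.MapsTo f (Set.Icc 0 1) (Set.Icc 0 1))
    (hs : f '' Set.Icc (0 : ℝ) 1 = Set.Icc (0 : ℝ) 1)
    (ε : ℝ) (hε : 0 < ε) :
    IsPeps f ε ↔ ∃ x₁ x₂ x₃ : ℝ, 0 ≤ x₁ ∧ x₁ < x₂ ∧ x₂ < x₃ ∧ x₃ ≤ 1 ∧
      ((|f x₁ - 0| < ε ∧ |f x₃ - 0| < ε ∧ |f x₂ - 1| < ε) ∨
        (|f x₁ - 1| < ε ∧ |f x₃ - 1| < ε ∧ |f x₂ - 0| < ε)) := by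
  constructor
  · intro hP
    obtain ⟨p, hp, hfp⟩ : ∃ p ∈ Icc (0:ℝ) 1, f p = 0 := by
      have h0 : (0:ℝ) ∈ f '' Icc (0:ℝ) 1 := by rw [hs]; exact ⟨le_refl 0, zero_le_one⟩
      obtain ⟨p, hp, hfp⟩ := h0; exact ⟨p, hp, hfp⟩
    obtain ⟨q, hq, hfq⟩ : ∃ q ∈ Icc (0:ℝ) 1, f q = 1 := by
      have h1 : (1:ℝ) ∈ f '' Icc (0:ℝ) 1 := by rw [hs]; exact ⟨zero_le_one, le_refl 1⟩
      obtain ⟨q, hq, hfq⟩ := h1; exact ⟨q, hq, hfq⟩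
    rcases le_or_gt ε (1/2) with hε2 | hε2
    · -- main case: ε ≤ 1/2
      set L := {x : ℝ | x ∈ Icc (0:ℝ) 1 ∧ |f x - 0| < ε} with hLdef
      set H := {x : ℝ | x ∈ Icc (0:ℝ) 1 ∧ |f x - 1| < ε} with hHdef
      have hpL : p ∈ L := ⟨hp, by rw [hfp, sub_zero, abs_zero]; exact hε⟩
      have hqH : q ∈ H := ⟨hq, by rw [hfq, sub_self, abs_zero]; exact hε⟩
      have hdisj : ∀ x, x ∈ L → x ∈ H → False := by
        intro x hxL hxH
        have h1 := abs_lt.1 hxL.2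
        have h2 := abs_lt.1 hxH.2
        linarith
      by_contra hno
      have noA : ∀ l₁ h l₂, l₁ ∈ L → h ∈ H → l₂ ∈ L → l₁ < h → h < l₂ → False := by
        intro l₁ h l₂ h1 h2 h3 h12 h23
        exact hno ⟨l₁, h, l₂, h1.1.1, h12, h23, h3.1.2, Or.inl ⟨h1.2, h3.2, h2.2⟩⟩
      have noB : ∀ h₁ l h₂, h₁ ∈ H → l ∈ L → h₂ ∈ H → h₁ < l → l < h₂ → False := by
        intro h₁ l h₂ h1 h2 h3 h12 h23
        exact hno ⟨h₁, l, h₂, h1.1.1, h12, h23, h3.1.2, Or.inr ⟨h1.2, h3.2, h2.2⟩⟩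
      have sep : (∀ l ∈ L, ∀ h ∈ H, l < h) ∨ (∀ h ∈ H, ∀ l ∈ L, h < l) := by
        by_contra hsep
        push_neg at hsep
        obtain ⟨⟨l₀, hl₀, h₀, hh₀, hle₀⟩, ⟨h₁, hh₁, l₁, hl₁, hle₁⟩⟩ := hsep
        have h₀lt : h₀ < l₀ := hle₀.lt_of_ne fun e => hdisj l₀ hl₀ (e ▸ hh₀)
        have h₁lt : l₁ < h₁ := hle₁.lt_of_ne fun e => hdisj l₁ hl₁ (e ▸ hh₁)
        rcases lt_trichotomy l₀ h₁ with hh | hh | hh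
        · exact noB h₀ l₀ h₁ hh₀ hl₀ hh₁ h₀lt hh
        · exact hdisj l₀ hl₀ (hh ▸ hh₁)
        · exact noA l₁ h₁ l₀ hl₁ hh₁ hl₀ h₁lt hh
      have huv01 : (2:ℝ) * ε ≤ |(0:ℝ) - 1| := by rw [zero_sub, abs_neg, abs_one]; linarith
      have huv10 : (2:ℝ) * ε ≤ |(1:ℝ) - 0| := by rw [sub_zero, abs_one]; linarith
      rcases sep with hsep | hsep
      · exact main_contra hε hm hc hP huv01 ⟨p, hpL⟩ ⟨q, hqH⟩
          ⟨le_refl 0, zero_le_one⟩ ⟨zero_le_one, le_refl 1⟩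
          (fun l hl1 hl2 h hh1 hh2 => hsep l ⟨hl1, hl2⟩ h ⟨hh1, hh2⟩)
      · exact main_contra hε hm hc hP huv10 ⟨q, hqH⟩ ⟨p, hpL⟩
          ⟨zero_le_one, le_refl 1⟩ ⟨le_refl 0, zero_le_one⟩
          (fun h hh1 hh2 l hl1 hl2 => hsep h ⟨hh1, hh2⟩ l ⟨hl1, hl2⟩)
    · -- easy case: ε > 1/2
      have hsub : uIcc p q ⊆ Icc (0:ℝ) 1 := (ordConnected_Icc).uIcc_subset hp hq
      obtain ⟨m, hmuIcc, hfm⟩ : ∃ m ∈ uIcc p q, f m = 1/2 := by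
        have hmem : (1/2 : ℝ) ∈ uIcc (f p) (f q) := by
          rw [hfp, hfq, uIcc_of_le zero_le_one, mem_Icc]; norm_num
        obtain ⟨m, hm', hfm⟩ := intermediate_value_uIcc (hc.mono hsub) hmem
        exact ⟨m, hm', hfm⟩
      have hm01 : m ∈ Icc (0:ℝ) 1 := hsub hmuIcc
      obtain ⟨δ, hδ, hδ'⟩ := Metric.continuousWithinAt_iff.1 (hc m hm01) (ε - 1/2)
        (by linarith)
      have key : ∀ x, x ∈ Icc (0:ℝ) 1 → |x - m| < δ → |f x - 0| < ε ∧ |f x - 1| < ε := by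
        intro x hx hdx
        have h := hδ' hx (by rwa [Real.dist_eq])
        rw [Real.dist_eq, hfm] at h
        have h' := abs_lt.1 h
        have hx0 := (hm hx).1
        have hx1 := (hm hx).2
        constructor <;> rw [abs_lt] <;> constructor <;> linarith
      set r := min (δ/3) (1/8 : ℝ) with hr
      have hr0 : 0 < r := lt_min (by linarith) (by norm_num)
      have hrδ : r ≤ δ/3 := min_le_left _ _
      have hr8 : r ≤ 1/8 := min_le_right _ _
      rcases le_total m (1/2) with hm2 | hm2
      · refine ⟨m, m + r, m + 2*r, hm01.1, by linarith, by linarith, by linarith,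
          Or.inl ⟨?_, ?_, ?_⟩⟩
        · exact (key m hm01 (by rw [sub_self, abs_zero]; linarith)).1
        · exact (key (m + 2*r) ⟨by linarith [hm01.1], by linarith⟩
            (by rw [add_sub_cancel_left, abs_of_pos (by linarith)]; linarith)).1
        · exact (key (m + r) ⟨by linarith [hm01.1], by linarith⟩
            (by rw [add_sub_cancel_left, abs_of_pos hr0]; linarith)).2
      · refine ⟨m - 2*r, m - r, m, by linarith [hm01.1], by linarith, by linarith, hm01.2,
          Or.inl ⟨?_, ?_, ?_⟩⟩
        · exact (key (m - 2*r) ⟨by linarith, by linarith [hm01.2]⟩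
            (by have he2 : m - 2*r - m = -(2*r) := by ring
                rw [he2, abs_neg, abs_of_pos (by linarith)]; linarith)).1
        · exact (key m hm01 (by rw [sub_self, abs_zero]; linarith)).1
        · exact (key (m - r) ⟨by linarith, by linarith [hm01.2]⟩
            (by have he2 : m - r - m = -r := by ring
                rw [he2, abs_neg, abs_of_pos hr0]; linarith)).2
  · rintro ⟨x₁, x₂, x₃, h01, h12, h23, h31, hpat⟩
    intro a b c d hU
    by_cases hA : (Icc a b).Nonempty
    · by_cases hB : (Icc c d).Nonempty
      · have hAsub : Icc a b ⊆ Icc (0:ℝ) 1 := hU ▸ subset_union_left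
        have hBsub : Icc c d ⊆ Icc (0:ℝ) 1 := hU ▸ subset_union_right
        have hx1m : x₁ ∈ Icc (0:ℝ) 1 := ⟨h01, by linarith⟩
        have hx2m : x₂ ∈ Icc (0:ℝ) 1 := ⟨by linarith, by linarith⟩
        have hx3m : x₃ ∈ Icc (0:ℝ) 1 := ⟨by linarith, h31⟩
        have hpair : ∀ (a' b' : ℝ), Icc a' b' ⊆ Icc (0:ℝ) 1 → x₂ ∈ Icc a' b' →
            (x₁ ∈ Icc a' b' ∨ x₃ ∈ Icc a' b') →
            hausdorffDist (f '' Icc a' b') (Icc (0:ℝ) 1) < ε := by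
          intro a' b' hsub' h2' h13'
          apply haus_lt_of_dense hε hsub' hm
          rcases h13' with h1' | h3'
          · rcases hpat with ⟨ha1, ha3, ha2⟩ | ⟨hb1, hb3, hb2⟩
            · exact dense_of_two_points hε hc hm hsub' h1' h2' ha1 ha2
            · exact dense_of_two_points hε hc hm hsub' h2' h1' hb2 hb1
          · rcases hpat with ⟨ha1, ha3, ha2⟩ | ⟨hb1, hb3, hb2⟩
            · exact dense_of_two_points hε hc hm hsub' h3' h2' ha3 ha2
            · exact dense_of_two_points hε hc hm hsub' h2' h3' hb2 hb3
        have hx2AB : x₂ ∈ Icc a b ∪ Icc c d := hU ▸ hx2m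
        have hx1AB : x₁ ∈ Icc a b ∪ Icc c d := hU ▸ hx1m
        have hx3AB : x₃ ∈ Icc a b ∪ Icc c d := hU ▸ hx3m
        rcases hx2AB with h2A | h2B
        · rcases hx1AB with h1A | h1B
          · exact Or.inl (hpair a b hAsub h2A (Or.inl h1A))
          · rcases hx3AB with h3A | h3B
            · exact Or.inl (hpair a b hAsub h2A (Or.inr h3A))
            · have h2B : x₂ ∈ Icc c d := ⟨h1B.1.trans h12.le, h23.le.trans h3B.2⟩
              exact Or.inr (hpair c d hBsub h2B (Or.inl h1B))
        · rcases hx1AB with h1A | h1B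
          · rcases hx3AB with h3A | h3B
            · have h2A : x₂ ∈ Icc a b := ⟨h1A.1.trans h12.le, h23.le.trans h3A.2⟩
              exact Or.inl (hpair a b hAsub h2A (Or.inl h1A))
            · exact Or.inr (hpair c d hBsub h2B (Or.inr h3B))
          · exact Or.inr (hpair c d hBsub h2B (Or.inl h1B))
      · right
        rw [not_nonempty_iff_eq_empty.1 hB, image_empty]
        rw [hausdorffDist_comm, hausdorffDist_empty]
        exact hε
    · left
      rw [not_nonempty_iff_eq_empty.1 hA, image_empty]
      rw [hausdorffDist_comm, hausdorffDist_empty]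
      exact hε
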